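/- Consider the uniform HRT-MSLQ instance with quotas [ℓ,u] (1 ≤ ℓ ≤ u) on all hospitals: residents a_1..a_u, b_1..b_u, c_1..c_u; hospitals h_1..h_u, x, y; a_i prefers x to h_i; b_i prefers x to y; c_i accepts only y; h_i accepts only a_i; x is indifferent among all a's and b's; y strictly prefers every b to every c. Then M = {(a_i,x)} ∪ {(b_i,y)} and N = {(a_i,h_i)} ∪ {(b_i,x)} ∪ {(c_i,y)} are both stable, with s(M) = 2 and s(N) = u/ℓ + 2. Hence s(N)/s(M) ≥ θ/2 + 1 where θ = u/ℓ. -/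

import Mathlib

/-- An instance of the Hospitals/Residents problem with ties, incomplete lists,
and lower/upper quotas (HRT-MSLQ).  Preferences are given by rank functions
(smaller rank = more preferred); ties are allowed (equal ranks). -/
structure HRTInstance (R H : Type) [Fintype R] [DecidableEq R] [Fintype H] [DecidableEq H] where
  acc : R → H → Prop
  rRank : R → H → ℕ
  hRank : H → R → ℕ
  lq : H → ℕ
  uq : H → ℕ

namespace HRTInstance

variable {R H : Type} [Fintype R] [DecidableEq R] [Fintype H] [DecidableEq H]

/-- The set of residents assigned to hospital `h` by assignment `M`. -/
def assignees (M : R → Option H) (h : H) : Finset R :=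
  Finset.univ.filter (fun r => M r = some h)

/-- `M` is a matching: it respects acceptability and upper quotas. -/
def IsMatching (I : HRTInstance R H) (M : R → Option H) : Prop :=
  (∀ r h, M r = some h → I.acc r h) ∧ ∀ h, (assignees M h).card ≤ I.uq h

/-- `(r, h)` is a blocking pair for `M`. -/
def Blocks (I : HRTInstance R H) (M : R → Option H) (r : R) (h : H) : Prop :=
  I.acc r h ∧
  (M r = none ∨ ∃ h', M r = some h' ∧ I.rRank r h < I.rRank r h') ∧
  ((assignees M h).card < I.uq h ∨ ∃ r' ∈ assignees M h, I.hRank h r < I.hRank h r')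

/-- `M` is a stable matching. -/
def IsStable (I : HRTInstance R H) (M : R → Option H) : Prop :=
  I.IsMatching M ∧ ∀ r h, ¬ I.Blocks M r h

/-- The total satisfaction ratio (score) of `M`:
`s(M) = Σ_h min{1, |M(h)|/ℓ(h)}`, with score `1` when `ℓ(h) = 0`. -/
def score (I : HRTInstance R H) (M : R → Option H) : ℚ :=
  ∑ h, if I.lq h = 0 then 1
       else min 1 (((assignees M h).card : ℚ) / (I.lq h : ℚ))

end HRTInstance

/-- Residents `a_i = .inl i`, `b_i = .inr (.inl i)`, `c_i = .inr (.inr i)`;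
hospitals `h_i = .inl i`, `x = .inr 0`, `y = .inr 1`, all with quotas `[ℓ,u]`.
`a_i` prefers `x` to `h_i`; `b_i` prefers `x` to `y`; `c_i` accepts only `y`;
`h_i` accepts only `a_i`; `x` is indifferent among all `a`'s and `b`'s;
`y` strictly prefers every `b` to every `c`. -/
def I17 (l u : ℕ) : HRTInstance (Fin u ⊕ (Fin u ⊕ Fin u)) (Fin u ⊕ Fin 2) where
  acc r h := match r, h with
    | .inl i, .inl j => i = j
    | .inl _, .inr k => k = 0
    | .inr (.inl _), .inr _ => True
    | .inr (.inl _), .inl _ => False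
    | .inr (.inr _), .inr k => k = 1
    | .inr (.inr _), .inl _ => False
  rRank _ h := match h with
    | .inl _ => 1
    | .inr k => k.val
  hRank _ r := match r with
    | .inr (.inr _) => 1
    | _ => 0
  lq _ := l
  uq _ := u

def M17 (u : ℕ) : (Fin u ⊕ (Fin u ⊕ Fin u)) → Option (Fin u ⊕ Fin 2)
  | .inl _ => some (.inr 0)
  | .inr (.inl _) => some (.inr 1)
  | .inr (.inr _) => none

def N17 (u : ℕ) : (Fin u ⊕ (Fin u ⊕ Fin u)) → Option (Fin u ⊕ Fin 2)
  | .inl i => some (.inl i)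
  | .inr (.inl _) => some (.inr 0)
  | .inr (.inr _) => some (.inr 1)

section Aux

lemma mem_assignees' {R H : Type} [Fintype R] [DecidableEq R] [Fintype H] [DecidableEq H]
    (M : R → Option H) (h : H) (r : R) :
    r ∈ HRTInstance.assignees M h ↔ M r = some h := by
  simp [HRTInstance.assignees]

variable (l u : ℕ)

lemma cardM_x : (HRTInstance.assignees (M17 u) (.inr 0)).card = u := by
  have : HRTInstance.assignees (M17 u) (.inr 0)
      = Finset.univ.map ⟨Sum.inl, Sum.inl_injective⟩ := by
    ext r
    rcases r with i | (i | i) <;> simp [mem_assignees', M17]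
  simp [this]

lemma cardM_y : (HRTInstance.assignees (M17 u) (.inr 1)).card = u := by
  have : HRTInstance.assignees (M17 u) (.inr 1)
      = Finset.univ.map ⟨fun i => Sum.inr (Sum.inl i), fun a b h => by simpa using h⟩ := by
    ext r
    rcases r with i | (i | i) <;> simp [mem_assignees', M17] <;> simp [DFunLike.coe]
  simp [this]

lemma cardM_h (j : Fin u) : (HRTInstance.assignees (M17 u) (.inl j)).card = 0 := by
  have : HRTInstance.assignees (M17 u) (.inl j) = ∅ := by
    ext r
    rcases r with i | (i | i) <;> simp [mem_assignees', M17]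
  simp [this]

lemma cardN_x : (HRTInstance.assignees (N17 u) (.inr 0)).card = u := by
  have : HRTInstance.assignees (N17 u) (.inr 0)
      = Finset.univ.map ⟨fun i => Sum.inr (Sum.inl i), fun a b h => by simpa using h⟩ := by
    ext r
    rcases r with i | (i | i) <;> simp [mem_assignees', N17] <;> simp [DFunLike.coe]
  simp [this]

lemma cardN_y : (HRTInstance.assignees (N17 u) (.inr 1)).card = u := by
  have : HRTInstance.assignees (N17 u) (.inr 1)
      = Finset.univ.map ⟨fun i => Sum.inr (Sum.inr i), fun a b h => by simpa using h⟩ := by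
    ext r
    rcases r with i | (i | i) <;> simp [mem_assignees', N17] <;> simp [DFunLike.coe]
  simp [this]

lemma cardN_h (j : Fin u) : (HRTInstance.assignees (N17 u) (.inl j)).card = 1 := by
  have : HRTInstance.assignees (N17 u) (.inl j) = {Sum.inl j} := by
    ext r
    rcases r with i | (i | i) <;> simp [mem_assignees', N17]
  simp [this]

end Aux

theorem stmt_17' (l u : ℕ) (hl : 1 ≤ l) (hlu : l ≤ u) :
    (I17 l u).IsStable (M17 u) ∧ (I17 l u).IsStable (N17 u) ∧
    (I17 l u).score (M17 u) = 2 ∧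
    (I17 l u).score (N17 u) = (u : ℚ) / (l : ℚ) + 2 ∧
    (u : ℚ) / (l : ℚ) / 2 + 1 ≤ (I17 l u).score (N17 u) / (I17 l u).score (M17 u) := by
  have hl0 : l ≠ 0 := by omega
  have hlQ : (0:ℚ) < (l:ℚ) := by exact_mod_cast (by omega : 0 < l)
  have hluQ : (l:ℚ) ≤ (u:ℚ) := by exact_mod_cast hlu
  have hminM : min (1:ℚ) ((u:ℚ)/(l:ℚ)) = 1 :=
    min_eq_left (by rw [le_div_iff₀ hlQ]; simpa using hluQ)
  have hminN : min (1:ℚ) ((1:ℚ)/(l:ℚ)) = 1/(l:ℚ) :=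
    min_eq_right (by rw [div_le_one hlQ]; exact_mod_cast hl)
  have hsM : (I17 l u).score (M17 u) = 2 := by
    rw [HRTInstance.score, Fintype.sum_sum_type]
    simp only [I17, cardM_x, cardM_y, cardM_h, if_neg hl0, Fin.sum_univ_two]
    rw [hminM]
    norm_num [hminM]
  have hsN : (I17 l u).score (N17 u) = (u : ℚ) / (l : ℚ) + 2 := by
    rw [HRTInstance.score, Fintype.sum_sum_type]
    simp only [I17, cardN_x, cardN_y, cardN_h, if_neg hl0, Fin.sum_univ_two]
    push_cast
    rw [hminN, hminM]
    simp [Finset.sum_const, mul_one_div]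
    ring
  refine ⟨?_, ?_, hsM, hsN, ?_⟩
  · constructor
    · constructor
      · intro r h hr
        rcases r with i | (i | i) <;> rcases h with j | k <;>
          simp_all [M17, I17] <;> omega
      · intro h
        rcases h with j | k
        · simp [cardM_h]
        · fin_cases k <;> simp [cardM_x, cardM_y, I17]
    · rintro r h ⟨hacc, hpref, hcap⟩
      rcases r with i | (i | i)
      · -- a_i matched to x, rank 0, no better
        rcases hpref with h1 | ⟨h', hh', hlt⟩
        · simp [M17] at h1
        · simp [M17] at hh'
          subst hh'
          rcases h with j | k <;> simp [I17] at hlt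
      · -- b_i matched to y rank 1; better only x
        rcases hpref with h1 | ⟨h', hh', hlt⟩
        · simp [M17] at h1
        · simp [M17] at hh'
          subst hh'
          rcases h with j | k
          · simp [I17] at hacc
          · simp [I17] at hlt
            have hk : k = 0 := by omega
            subst hk
            rcases hcap with hc | ⟨r', hr', hlt'⟩
            · rw [cardM_x] at hc; simp [I17] at hc
            · rw [mem_assignees'] at hr'
              rcases r' with i' | (i' | i') <;> simp [M17] at hr' <;>
                simp [I17] at hlt'
      · -- c_i unmatched, acc only y
        rcases h with j | k
        · simp [I17] at hacc
        · simp [I17] at hacc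
          subst hacc
          rcases hcap with hc | ⟨r', hr', hlt'⟩
          · rw [cardM_y] at hc; simp [I17] at hc
          · rw [mem_assignees'] at hr'
            rcases r' with i' | (i' | i') <;> simp [M17] at hr' <;>
              simp [I17] at hlt'
  · constructor
    · constructor
      · intro r h hr
        rcases r with i | (i | i) <;> rcases h with j | k <;>
          simp_all [N17, I17]
      · intro h
        rcases h with j | k
        · simp [cardN_h, I17]; omega
        · fin_cases k <;> simp [cardN_x, cardN_y, I17]
    · rintro r h ⟨hacc, hpref, hcap⟩
      rcases r with i | (i | i)
      · -- a_i matched to h_i rank 1; better only x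
        rcases hpref with h1 | ⟨h', hh', hlt⟩
        · simp [N17] at h1
        · simp [N17] at hh'
          subst hh'
          rcases h with j | k
          · simp [I17] at hlt
          · simp [I17] at hlt hacc
            subst hacc
            rcases hcap with hc | ⟨r', hr', hlt'⟩
            · rw [cardN_x] at hc; simp [I17] at hc
            · rw [mem_assignees'] at hr'
              rcases r' with i' | (i' | i') <;> simp [N17] at hr' <;>
                simp [I17] at hlt'
      · -- b_i matched to x rank 0
        rcases hpref with h1 | ⟨h', hh', hlt⟩
        · simp [N17] at h1
        · simp [N17] at hh'
          subst hh'
          rcases h with j | k <;> simp [I17] at hlt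
      · -- c_i matched to y rank 1; better would be x but not acceptable
        rcases hpref with h1 | ⟨h', hh', hlt⟩
        · simp [N17] at h1
        · simp [N17] at hh'
          subst hh'
          rcases h with j | k
          · simp [I17] at hacc
          · simp [I17] at hacc hlt
            omega
  · rw [hsM, hsN]
    apply le_of_eq
    ring


/-- `M = {(a_i,x)} ∪ {(b_i,y)}` and `N = {(a_i,h_i)} ∪ {(b_i,x)} ∪ {(c_i,y)}` are
both stable, with `s(M) = 2` and `s(N) = u/ℓ + 2`; hence `s(N)/s(M) ≥ θ/2 + 1`. -/
theorem stmt_17 (l u : ℕ) (hl : 1 ≤ l) (hlu : l ≤ u) :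
    (I17 l u).IsStable (M17 u) ∧ (I17 l u).IsStable (N17 u) ∧
    (I17 l u).score (M17 u) = 2 ∧
    (I17 l u).score (N17 u) = (u : ℚ) / (l : ℚ) + 2 ∧
    (u : ℚ) / (l : ℚ) / 2 + 1 ≤ (I17 l u).score (N17 u) / (I17 l u).score (M17 u) := by
  have := stmt_17' l u hl hlu
  exact this
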